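/- Let (U,V) be a hereditary cotorsion pair in Mod-A generated by a set, and assume it is weakly right periodic, i.e., every acyclic complex of injective A-modules has all cycle modules in V. Then for every n ≥ 0, every Gorenstein injective A-module M satisfies Ext_A^1(L, M) = 0 for every A-module L of U-projective dimension at most n. -/

import Mathlib

universe u

open CategoryTheory Limits

namespace OSG

variable (A : Type u) [Ring A]

/-- `Ext¹_A(M,N) = 0`: every short exact sequence `0 → N → E → M → 0` splits. -/
def Ext1Zero (M N : ModuleCat.{u} A) : Prop :=
  ∀ (E : ModuleCat.{u} A) (i : N ⟶ E) (p : E ⟶ M),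
    Function.Injective i → Function.Surjective p →
      LinearMap.range i.hom = LinearMap.ker p.hom → ∃ r : E ⟶ N, i ≫ r = 𝟙 N

/-- `Ext^{n+1}_A(M,N) = 0`, expressed by dimension shifting along projective resolutions. -/
def ExtZeroSucc (n : ℕ) (M N : ModuleCat.{u} A) : Prop :=
  ∀ P : ProjectiveResolution M, Ext1Zero A (cokernel (P.complex.d (n + 1) n)) N

def IsCotorsionPair (U V : Set (ModuleCat.{u} A)) : Prop :=
  U = {M | ∀ N ∈ V, Ext1Zero A M N} ∧ V = {N | ∀ M ∈ U, Ext1Zero A M N}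

/-- Every module has a special `U`-precover and a special `V`-preenvelope. -/
def IsCompletePair (U V : Set (ModuleCat.{u} A)) : Prop :=
  (∀ M : ModuleCat.{u} A, ∃ (K U₀ : ModuleCat.{u} A) (j : K ⟶ U₀) (p : U₀ ⟶ M),
      U₀ ∈ U ∧ K ∈ V ∧ Function.Injective j ∧ Function.Surjective p ∧
        LinearMap.range j.hom = LinearMap.ker p.hom) ∧
  (∀ M : ModuleCat.{u} A, ∃ (V₀ C : ModuleCat.{u} A) (ι : M ⟶ V₀) (q : V₀ ⟶ C),
      V₀ ∈ V ∧ C ∈ U ∧ Function.Injective ι ∧ Function.Surjective q ∧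
        LinearMap.range ι.hom = LinearMap.ker q.hom)

def IsHereditaryPair (U V : Set (ModuleCat.{u} A)) : Prop :=
  ∀ M ∈ U, ∀ N ∈ V, ∀ n : ℕ, ExtZeroSucc A n M N

def leftPerp (C : Set (ModuleCat.{u} A)) : Set (ModuleCat.{u} A) :=
  {M | ∀ N ∈ C, Ext1Zero A M N}

def rightPerp (C : Set (ModuleCat.{u} A)) : Set (ModuleCat.{u} A) :=
  {N | ∀ M ∈ C, Ext1Zero A M N}

def GeneratedBySet (V : Set (ModuleCat.{u} A)) : Prop :=
  ∃ S : Set (ModuleCat.{u} A), V = rightPerp A S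

/-- `M` has a resolution `0 → U_n → ⋯ → U_0 → M → 0` with all `U_i ∈ U`
(i.e. `U`-projective dimension at most `n`). -/
def ResLE (U : Set (ModuleCat.{u} A)) : ℕ → ModuleCat.{u} A → Prop
  | 0, M => M ∈ U
  | n + 1, M =>
    ResLE U n M ∨
      ∃ (K U₀ : ModuleCat.{u} A) (j : K ⟶ U₀) (p : U₀ ⟶ M),
        U₀ ∈ U ∧ Function.Injective j ∧ Function.Surjective p ∧
          LinearMap.range j.hom = LinearMap.ker p.hom ∧ ResLE U n K

/-- `M` has a coresolution `0 → M → V^0 → ⋯ → V^n → 0` with all `V^i ∈ V`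
(i.e. `V`-injective dimension at most `n`). -/
def CoresLE (V : Set (ModuleCat.{u} A)) : ℕ → ModuleCat.{u} A → Prop
  | 0, M => M ∈ V
  | n + 1, M =>
    CoresLE V n M ∨
      ∃ (V₀ C : ModuleCat.{u} A) (ι : M ⟶ V₀) (q : V₀ ⟶ C),
        V₀ ∈ V ∧ Function.Injective ι ∧ Function.Surjective q ∧
          LinearMap.range ι.hom = LinearMap.ker q.hom ∧ CoresLE V n C

/-- The `U`-projective dimension of `M`, as an extended natural number. -/
noncomputable def resDim (U : Set (ModuleCat.{u} A)) (M : ModuleCat.{u} A) : ℕ∞ :=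
  sInf {c : ℕ∞ | ∃ n : ℕ, c = n ∧ ResLE A U n M}

/-- The `V`-injective dimension of `M`, as an extended natural number. -/
noncomputable def coresDim (V : Set (ModuleCat.{u} A)) (M : ModuleCat.{u} A) : ℕ∞ :=
  sInf {c : ℕ∞ | ∃ n : ℕ, c = n ∧ CoresLE A V n M}

def prjClass : Set (ModuleCat.{u} A) := {M | Projective M}

def injClass : Set (ModuleCat.{u} A) := {M | Injective M}

section Complexes

/-- The complex `T` is acyclic (exact everywhere). -/
def Acyclic (T : ChainComplex (ModuleCat.{u} A) ℤ) : Prop := ∀ n : ℤ, T.ExactAt n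

/-- The complex `Hom_A(E, T)` is acyclic. -/
def HomIntoExact (E : ModuleCat.{u} A) (T : ChainComplex (ModuleCat.{u} A) ℤ) : Prop :=
  ∀ (n : ℤ) (f : E ⟶ T.X n), f ≫ T.d n (n - 1) = 0 →
    ∃ g : E ⟶ T.X (n + 1), g ≫ T.d (n + 1) n = f

/-- The complex `Hom_A(T, W)` is acyclic. -/
def HomFromExact (T : ChainComplex (ModuleCat.{u} A) ℤ) (W : ModuleCat.{u} A) : Prop :=
  ∀ (n : ℤ) (f : T.X n ⟶ W), T.d (n + 1) n ≫ f = 0 →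
    ∃ g : T.X (n - 1) ⟶ W, T.d n (n - 1) ≫ g = f

/-- `M` is a Gorenstein injective `A`-module. -/
def GorensteinInjective (M : ModuleCat.{u} A) : Prop :=
  ∃ T : ChainComplex (ModuleCat.{u} A) ℤ,
    (∀ n, Injective (T.X n)) ∧ Acyclic A T ∧
      (∀ E : ModuleCat.{u} A, Injective E → HomIntoExact A E T) ∧
      ∃ n : ℤ, Nonempty (M ≅ T.cycles n)

/-- `M` is a Gorenstein projective `A`-module. -/
def GorensteinProjective (M : ModuleCat.{u} A) : Prop :=
  ∃ T : ChainComplex (ModuleCat.{u} A) ℤ,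
    (∀ n, Projective (T.X n)) ∧ Acyclic A T ∧
      (∀ Q : ModuleCat.{u} A, Projective Q → HomFromExact A T Q) ∧
      ∃ n : ℤ, Nonempty (M ≅ T.cycles n)

end Complexes
section Tensor

/-- The balancing relations inside `N ⊗_ℤ M` for a right module `N` and a left module `M`. -/
def balRel (N : ModuleCat.{u} Aᵐᵒᵖ) (M : ModuleCat.{u} A) :
    Submodule ℤ (TensorProduct ℤ N M) :=
  Submodule.span ℤ
    {x | ∃ (n : N) (a : A) (m : M),
      x = (MulOpposite.op a • n) ⊗ₜ[ℤ] m - n ⊗ₜ[ℤ] (a • m)}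

/-- The tensor product `N ⊗_A M` of a right `A`-module and a left `A`-module. -/
def balTensor (N : ModuleCat.{u} Aᵐᵒᵖ) (M : ModuleCat.{u} A) : Type u :=
  TensorProduct ℤ N M ⧸ balRel A N M

noncomputable instance (N : ModuleCat.{u} Aᵐᵒᵖ) (M : ModuleCat.{u} A) :
    AddCommGroup (balTensor A N M) :=
  inferInstanceAs (AddCommGroup (TensorProduct ℤ N M ⧸ balRel A N M))

noncomputable instance (N : ModuleCat.{u} Aᵐᵒᵖ) (M : ModuleCat.{u} A) :
    Module ℤ (balTensor A N M) :=
  inferInstanceAs (Module ℤ (TensorProduct ℤ N M ⧸ balRel A N M))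

/-- The map `N ⊗_A M → N ⊗_A M'` induced by `f : M → M'`. -/
noncomputable def balMap (N : ModuleCat.{u} Aᵐᵒᵖ) {M M' : ModuleCat.{u} A} (f : M ⟶ M') :
    balTensor A N M →ₗ[ℤ] balTensor A N M' :=
  Submodule.mapQ (balRel A N M) (balRel A N M')
    (LinearMap.lTensor (R := ℤ) N f.hom.toAddMonoidHom.toIntLinearMap)
    (by
      unfold balRel
      rw [Submodule.span_le]
      rintro x ⟨n, a, m, rfl⟩
      have h : f.hom.toAddMonoidHom.toIntLinearMap (a • m) = a • f.hom.toAddMonoidHom.toIntLinearMap m :=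
        f.hom.map_smul a m
      have key : LinearMap.lTensor (R := ℤ) N f.hom.toAddMonoidHom.toIntLinearMap
          ((MulOpposite.op a • n) ⊗ₜ[ℤ] m - n ⊗ₜ[ℤ] (a • m)) =
          (MulOpposite.op a • n) ⊗ₜ[ℤ] f.hom.toAddMonoidHom.toIntLinearMap m -
            n ⊗ₜ[ℤ] (a • f.hom.toAddMonoidHom.toIntLinearMap m) := by
        rw [map_sub, LinearMap.lTensor_tmul, LinearMap.lTensor_tmul, h]
      refine Submodule.mem_comap.mpr ?_
      have hmem := (Submodule.subset_span ⟨n, a, f.hom.toAddMonoidHom.toIntLinearMap m, rfl⟩ :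
        (MulOpposite.op a • n) ⊗ₜ[ℤ] f.hom.toAddMonoidHom.toIntLinearMap m -
            n ⊗ₜ[ℤ] (a • f.hom.toAddMonoidHom.toIntLinearMap m) ∈ Submodule.span ℤ
          {x | ∃ (n : N) (a : A) (m : M'),
            x = (MulOpposite.op a • n) ⊗ₜ[ℤ] m - n ⊗ₜ[ℤ] (a • m)})
      rw [← key] at hmem
      exact hmem)

/-- The map `N ⊗_A M → N' ⊗_A M` induced by `g : N → N'`. -/
noncomputable def balMapR {N N' : ModuleCat.{u} Aᵐᵒᵖ} (g : N ⟶ N') (M : ModuleCat.{u} A) :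
    balTensor A N M →ₗ[ℤ] balTensor A N' M :=
  Submodule.mapQ (balRel A N M) (balRel A N' M)
    (LinearMap.rTensor (R := ℤ) M g.hom.toAddMonoidHom.toIntLinearMap)
    (by
      unfold balRel
      rw [Submodule.span_le]
      rintro x ⟨n, a, m, rfl⟩
      have h : g.hom.toAddMonoidHom.toIntLinearMap (MulOpposite.op a • n) =
          MulOpposite.op a • g.hom.toAddMonoidHom.toIntLinearMap n :=
        g.hom.map_smul (MulOpposite.op a) n
      have key : LinearMap.rTensor (R := ℤ) M g.hom.toAddMonoidHom.toIntLinearMap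
          ((MulOpposite.op a • n) ⊗ₜ[ℤ] m - n ⊗ₜ[ℤ] (a • m)) =
          (MulOpposite.op a • g.hom.toAddMonoidHom.toIntLinearMap n) ⊗ₜ[ℤ] m -
            g.hom.toAddMonoidHom.toIntLinearMap n ⊗ₜ[ℤ] (a • m) := by
        rw [map_sub, LinearMap.rTensor_tmul, LinearMap.rTensor_tmul, h]
      refine Submodule.mem_comap.mpr ?_
      have hmem := (Submodule.subset_span ⟨g.hom.toAddMonoidHom.toIntLinearMap n, a, m, rfl⟩ :
        (MulOpposite.op a • g.hom.toAddMonoidHom.toIntLinearMap n) ⊗ₜ[ℤ] m -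
            g.hom.toAddMonoidHom.toIntLinearMap n ⊗ₜ[ℤ] (a • m) ∈ Submodule.span ℤ
          {x | ∃ (n : N') (a : A) (m : M),
            x = (MulOpposite.op a • n) ⊗ₜ[ℤ] m - n ⊗ₜ[ℤ] (a • m)})
      rw [← key] at hmem
      exact hmem)

/-- A left `A`-module `M` is flat if `− ⊗_A M` preserves injections of right `A`-modules. -/
def FlatM (M : ModuleCat.{u} A) : Prop :=
  ∀ (N N' : ModuleCat.{u} Aᵐᵒᵖ) (g : N ⟶ N'), Function.Injective g →
    Function.Injective (balMapR A g M)

def flatClass : Set (ModuleCat.{u} A) := {M | FlatM A M}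

/-- `M` is cotorsion if `Ext¹_A(F,M) = 0` for every flat module `F`. -/
def cotClass : Set (ModuleCat.{u} A) := {M | ∀ F ∈ flatClass A, Ext1Zero A F M}

end Tensor
section Rest

variable (A : Type u) [Ring A]

/-- Exactness of `N ⊗_A T` at spot `n`. -/
def TensorExactAt (N : ModuleCat.{u} Aᵐᵒᵖ) (T : ChainComplex (ModuleCat.{u} A) ℤ)
    (n : ℤ) : Prop :=
  LinearMap.range (balMap A N (T.d (n + 1) n)) = LinearMap.ker (balMap A N (T.d n (n - 1)))

/-- `M` is a Gorenstein flat `A`-module. -/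
def GorensteinFlat (M : ModuleCat.{u} A) : Prop :=
  ∃ T : ChainComplex (ModuleCat.{u} A) ℤ,
    (∀ n, T.X n ∈ flatClass A) ∧ Acyclic A T ∧
      (∀ N : ModuleCat.{u} Aᵐᵒᵖ, Injective N → ∀ n : ℤ, TensorExactAt A N T n) ∧
      ∃ n : ℤ, Nonempty (M ≅ T.cycles n)

def gprjClass : Set (ModuleCat.{u} A) := {M | GorensteinProjective A M}
def ginjClass : Set (ModuleCat.{u} A) := {M | GorensteinInjective A M}
def gflatClass : Set (ModuleCat.{u} A) := {M | GorensteinFlat A M}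

/-- projective dimension -/
noncomputable def pdim (M : ModuleCat.{u} A) : ℕ∞ := resDim A (prjClass A) M
/-- injective dimension -/
noncomputable def idim (M : ModuleCat.{u} A) : ℕ∞ := coresDim A (injClass A) M
/-- flat dimension -/
noncomputable def fdim (M : ModuleCat.{u} A) : ℕ∞ := resDim A (flatClass A) M
/-- Gorenstein projective dimension -/
noncomputable def gpdim (M : ModuleCat.{u} A) : ℕ∞ := resDim A (gprjClass A) M
/-- Gorenstein injective dimension -/
noncomputable def gidim (M : ModuleCat.{u} A) : ℕ∞ := coresDim A (ginjClass A) M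
/-- Gorenstein flat dimension -/
noncomputable def gfdim (M : ModuleCat.{u} A) : ℕ∞ := resDim A (gflatClass A) M

noncomputable def spli : ℕ∞ := ⨆ (I : ModuleCat.{u} A) (_ : Injective I), pdim A I
noncomputable def silp : ℕ∞ := ⨆ (P : ModuleCat.{u} A) (_ : Projective P), idim A P
noncomputable def sfli : ℕ∞ := ⨆ (I : ModuleCat.{u} A) (_ : Injective I), fdim A I
noncomputable def splf : ℕ∞ := ⨆ (F : ModuleCat.{u} A) (_ : F ∈ flatClass A), pdim A F

noncomputable def FPD : ℕ∞ := ⨆ (M : ModuleCat.{u} A) (_ : pdim A M ≠ ⊤), pdim A M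
noncomputable def FID : ℕ∞ := ⨆ (M : ModuleCat.{u} A) (_ : idim A M ≠ ⊤), idim A M
noncomputable def FFD : ℕ∞ := ⨆ (M : ModuleCat.{u} A) (_ : fdim A M ≠ ⊤), fdim A M

/-- Gorenstein global dimension. -/
noncomputable def Ggldim : ℕ∞ := ⨆ (M : ModuleCat.{u} A), gpdim A M
/-- Gorenstein weak global dimension. -/
noncomputable def Gwgldim : ℕ∞ := ⨆ (M : ModuleCat.{u} A), gfdim A M

/-- sup of `U`-projective dimensions of injective modules. -/
noncomputable def relspli (U : Set (ModuleCat.{u} A)) : ℕ∞ :=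
  ⨆ (I : ModuleCat.{u} A) (_ : Injective I), resDim A U I
/-- sup of `V`-injective dimensions of projective modules. -/
noncomputable def relsilp (V : Set (ModuleCat.{u} A)) : ℕ∞ :=
  ⨆ (P : ModuleCat.{u} A) (_ : Projective P), coresDim A V P
/-- finitistic `U`-projective dimension. -/
noncomputable def relFPD (U : Set (ModuleCat.{u} A)) : ℕ∞ :=
  ⨆ (M : ModuleCat.{u} A) (_ : resDim A U M ≠ ⊤), resDim A U M
/-- finitistic `V`-injective dimension. -/
noncomputable def relFID (V : Set (ModuleCat.{u} A)) : ℕ∞ :=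
  ⨆ (M : ModuleCat.{u} A) (_ : coresDim A V M ≠ ⊤), coresDim A V M

/-- Every acyclic complex of injectives has cycles in `V`. -/
def WeaklyRightPeriodic (V : Set (ModuleCat.{u} A)) : Prop :=
  ∀ T : ChainComplex (ModuleCat.{u} A) ℤ,
    (∀ n, Injective (T.X n)) → Acyclic A T → ∀ n : ℤ, T.cycles n ∈ V

/-- Every acyclic complex of projectives has cycles in `U`. -/
def WeaklyLeftPeriodic (U : Set (ModuleCat.{u} A)) : Prop :=
  ∀ T : ChainComplex (ModuleCat.{u} A) ℤ,
    (∀ n, Projective (T.X n)) → Acyclic A T → ∀ n : ℤ, T.cycles n ∈ U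

/-- A right `U`-totally acyclic complex witnesses a right `U`-Gorenstein module. -/
def RightGorenstein (U V : Set (ModuleCat.{u} A)) : Set (ModuleCat.{u} A) :=
  {M | ∃ T : ChainComplex (ModuleCat.{u} A) ℤ,
    (∀ n, T.X n ∈ U) ∧ Acyclic A T ∧ (∀ n : ℤ, T.cycles n ∈ V) ∧
      (∀ W ∈ U ∩ V, HomFromExact A T W) ∧ Nonempty (M ≅ cokernel (T.d 1 0))}

/-- acyclic with all cycles in `V`. -/
def VAcyclicCx (V : Set (ModuleCat.{u} A)) (W : ChainComplex (ModuleCat.{u} A) ℤ) : Prop :=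
  Acyclic A W ∧ ∀ n : ℤ, W.cycles n ∈ V

/-- acyclic with all cycles in `U`. -/
def UAcyclicCx (U : Set (ModuleCat.{u} A)) (W : ChainComplex (ModuleCat.{u} A) ℤ) : Prop :=
  Acyclic A W ∧ ∀ n : ℤ, W.cycles n ∈ U

/-- A complex of modules in `U` is semi-`U` if every chain map to a `V`-acyclic
complex is null-homotopic (equivalently, `Hom(X,W)` is acyclic for `V`-acyclic `W`). -/
def SemiU (U V : Set (ModuleCat.{u} A)) (X : ChainComplex (ModuleCat.{u} A) ℤ) : Prop :=
  (∀ n, X.X n ∈ U) ∧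
    ∀ W : ChainComplex (ModuleCat.{u} A) ℤ, VAcyclicCx A V W →
      ∀ f : X ⟶ W, Nonempty (Homotopy f 0)

/-- A complex of modules in `V` is semi-`V` if every chain map from a `U`-acyclic
complex to it is null-homotopic. -/
def SemiV (U V : Set (ModuleCat.{u} A)) (Y : ChainComplex (ModuleCat.{u} A) ℤ) : Prop :=
  (∀ n, Y.X n ∈ V) ∧
    ∀ T : ChainComplex (ModuleCat.{u} A) ℤ, UAcyclicCx A U T →
      ∀ f : T ⟶ Y, Nonempty (Homotopy f 0)

/-- `W` is isomorphic to the module `M` in the derived category. -/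
def IsReplacementOf (W : ChainComplex (ModuleCat.{u} A) ℤ) (M : ModuleCat.{u} A) : Prop :=
  (∀ n : ℤ, n ≠ 0 → W.ExactAt n) ∧ Nonempty (W.homology 0 ≅ M)

/-- `RGor_U`-projective dimension of `M` is at most `n`: some semi-`U`-`V` replacement `W`
of `M` has `Coker(W_{n+1} → W_n)` right `U`-Gorenstein. -/
def RGorpdLE (U V : Set (ModuleCat.{u} A)) (n : ℕ) (M : ModuleCat.{u} A) : Prop :=
  ∃ W : ChainComplex (ModuleCat.{u} A) ℤ,
    SemiU A U V W ∧ SemiV A U V W ∧ IsReplacementOf A W M ∧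
      cokernel (W.d ((n : ℤ) + 1) (n : ℤ)) ∈ RightGorenstein A U V

/-- The `RGor_U`-projective dimension. -/
noncomputable def rgorDim (U V : Set (ModuleCat.{u} A)) (M : ModuleCat.{u} A) : ℕ∞ :=
  sInf {c : ℕ∞ | ∃ n : ℕ, c = n ∧ RGorpdLE A U V n M}

/-- The `RGor_U` relative Gorenstein global dimension. -/
noncomputable def rgorGldim (U V : Set (ModuleCat.{u} A)) : ℕ∞ :=
  ⨆ (M : ModuleCat.{u} A), rgorDim A U V M

/-- The Gorenstein flat-cotorsion dimension. -/
noncomputable def gfcDim (M : ModuleCat.{u} A) : ℕ∞ :=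
  rgorDim A (flatClass A) (cotClass A) M

/-- The Gorenstein flat-cotorsion global dimension. -/
noncomputable def Gfcgldim : ℕ∞ := rgorGldim A (flatClass A) (cotClass A)

/-- `A` is right weak coherent: products of flat left `A`-modules have finite
flat dimension. -/
def RightWeakCoherent : Prop :=
  ∀ (ι : Type u) (F : ι → ModuleCat.{u} A), (∀ i, F i ∈ flatClass A) →
    fdim A (ModuleCat.of A ((i : ι) → F i)) ≠ ⊤

/-- `A` is left `ℵ₀`-noetherian: every left ideal is countably generated. -/
def Aleph0Noetherian : Prop :=
  ∀ I : Ideal A, ∃ s : Set A, s.Countable ∧ Ideal.span s = I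

end Rest


/-- factor a map killing the kernel through a surjection -/
lemma factor_through_surj {X Y Z : ModuleCat.{u} A} (q : X ⟶ Y) (h : X ⟶ Z)
    (hq : Function.Surjective q) (hker : ∀ x, q x = 0 → h x = 0) :
    ∃ t : Y ⟶ Z, q ≫ t = h := by
  have hfib : ∀ a b : X, q a = q b → h a = h b := by
    intro a b hab
    have h0 : h (a - b) = 0 := hker _ (by rw [map_sub, hab, sub_self])
    rw [map_sub, sub_eq_zero] at h0
    exact h0
  refine ⟨ModuleCat.ofHom ⟨⟨fun y => h (Function.surjInv hq y), fun y y' => ?_⟩, fun a y => ?_⟩, ?_⟩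
  · rw [← map_add]
    exact hfib _ _ (by rw [map_add, Function.surjInv_eq hq, Function.surjInv_eq hq,
      Function.surjInv_eq hq])
  · rw [RingHom.id_apply, ← map_smul]
    exact hfib _ _ (by rw [map_smul, Function.surjInv_eq hq, Function.surjInv_eq hq])
  · apply ModuleCat.hom_ext
    apply LinearMap.ext
    intro x
    exact hfib _ _ (Function.surjInv_eq hq (q x))

/-- lift through an injection, given the image lands in its range -/
lemma lift_range {K N E : ModuleCat.{u} A} (i : N ⟶ E) (hi : Function.Injective i)
    (u : K ⟶ E) (hu : ∀ x, u x ∈ LinearMap.range i.hom) :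
    ∃ φ : K ⟶ N, ∀ x, i (φ x) = u x := by
  let e := LinearEquiv.ofInjective i.hom hi
  refine ⟨ModuleCat.ofHom ((e.symm.toLinearMap).comp (LinearMap.codRestrict (LinearMap.range i.hom) u.hom hu)),
    fun x => ?_⟩
  have h1 : (e (e.symm ⟨u x, hu x⟩) : E) = i (e.symm ⟨u x, hu x⟩) :=
    LinearEquiv.ofInjective_apply _ _
  have h2 := e.apply_symm_apply ⟨u x, hu x⟩
  rw [h2] at h1
  exact h1.symm

lemma section_of_retraction {N E L : ModuleCat.{u} A} (i : N ⟶ E) (p : E ⟶ L)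
    (hp : Function.Surjective p) (hrk : LinearMap.range i.hom = LinearMap.ker p.hom)
    (r : E ⟶ N) (hr : i ≫ r = 𝟙 N) :
    ∃ s : L ⟶ E, ∀ l, p (s l) = l := by
  have hpi : ∀ z : N, p (i z) = 0 := by
    intro z
    have hz : i z ∈ LinearMap.ker p.hom := by
      rw [← hrk]; exact LinearMap.mem_range_self i.hom z
    exact hz
  obtain ⟨t, ht⟩ := factor_through_surj A p (𝟙 E - (r ≫ i)) hp (by
    intro x hx
    have hxr : x ∈ LinearMap.range i.hom := hrk ▸ hx
    obtain ⟨z, rfl⟩ := hxr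
    have : r (i z) = z := LinearMap.congr_fun (congrArg ModuleCat.Hom.hom hr) z
    show i z - i (r (i z)) = 0
    rw [this, sub_self])
  refine ⟨t, fun l => ?_⟩
  obtain ⟨e, rfl⟩ := hp l
  have h1 : t (p e) = e - i (r e) := LinearMap.congr_fun (congrArg ModuleCat.Hom.hom ht) e
  rw [h1, map_sub, hpi, sub_zero]

lemma retraction_of_section {N E L : ModuleCat.{u} A} (i : N ⟶ E) (p : E ⟶ L)
    (hi : Function.Injective i) (hrk : LinearMap.range i.hom = LinearMap.ker p.hom)
    (s : L ⟶ E) (hs : ∀ l, p (s l) = l) :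
    ∃ r : E ⟶ N, i ≫ r = 𝟙 N := by
  obtain ⟨r, hr⟩ := lift_range A i hi (𝟙 E - (p ≫ s)) (by
    intro x
    rw [hrk]
    show p (x - s (p x)) = 0
    rw [map_sub, hs, sub_self])
  refine ⟨r, ModuleCat.hom_ext (LinearMap.ext fun z => hi ?_)⟩
  have h1 := hr (i z)
  have hpz : p (i z) = 0 := by
    have hz : i z ∈ LinearMap.ker p.hom := by
      rw [← hrk]; exact LinearMap.mem_range_self i.hom z
    exact hz
  have h2 : (𝟙 E - (p ≫ s)) (i z) = i z := by
    show i z - s (p (i z)) = i z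
    rw [hpz, map_zero, sub_zero]
  rw [h2] at h1
  exact h1

/-- lift a map along a surjection whose kernel is Ext-orthogonal to the source -/
lemma lift_of_ext1 {X Y Z N : ModuleCat.{u} A} (g : Y ⟶ Z) (ι : N ⟶ Y)
    (hg : Function.Surjective g) (hι : Function.Injective ι)
    (hrk : LinearMap.range ι.hom = LinearMap.ker g.hom)
    (hext : Ext1Zero A X N) (f : X ⟶ Z) :
    ∃ h : X ⟶ Y, ∀ x, g (h x) = f x := by
  let Pm : Submodule A (↥X × ↥Y) :=
    LinearMap.ker ((f.hom.comp (LinearMap.fst A X Y)) -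
      (g.hom.comp (LinearMap.snd A X Y)))
  have hmem : ∀ v : ↥X × ↥Y, v ∈ Pm ↔ f v.1 = g v.2 := by
    intro v
    constructor
    · intro hv
      have : f v.1 - g v.2 = 0 := hv
      exact sub_eq_zero.mp this
    · intro hv
      show f v.1 - g v.2 = 0
      rw [hv, sub_self]
  let PE : ModuleCat.{u} A := ModuleCat.of A ↥Pm
  let ιP : N ⟶ PE := ModuleCat.ofHom <| LinearMap.codRestrict Pm
    (LinearMap.prod 0 ι.hom)
    (fun z => (hmem _).mpr (by
      show f 0 = g (ι z)
      have : ι z ∈ LinearMap.ker g.hom := hrk ▸ LinearMap.mem_range_self ι.hom z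
      rw [map_zero]
      exact this.symm))
  let πP : PE ⟶ X := ModuleCat.ofHom <| (LinearMap.fst A X Y).comp Pm.subtype
  have hιPinj : Function.Injective ιP := by
    intro a b hab
    have : (0, ι a) = ((0 : ↥X), ι b) := congrArg Subtype.val hab
    exact hι (congrArg Prod.snd this)
  have hπPsurj : Function.Surjective πP := by
    intro x
    obtain ⟨y, hy⟩ := hg (f x)
    exact ⟨⟨(x, y), (hmem _).mpr hy.symm⟩, rfl⟩
  have hrkP : LinearMap.range ιP.hom = LinearMap.ker πP.hom := by
    apply le_antisymm
    · rintro _ ⟨z, rfl⟩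
      show (LinearMap.fst A (↥X) (↥Y)) ((0 : ↥X), ι z) = 0
      rfl
    · rintro ⟨⟨x, y⟩, hxy⟩ hx
      have hx0 : x = 0 := hx
      have hgy : g y = 0 := by
        have := (hmem _).mp hxy
        rw [hx0, map_zero] at this
        exact this.symm
      have : y ∈ LinearMap.range ι.hom := by rw [hrk]; exact hgy
      obtain ⟨z, rfl⟩ := this
      refine ⟨z, Subtype.ext ?_⟩
      show ((0 : ↥X), ι z) = (x, ι z)
      rw [hx0]
  obtain ⟨r, hrr⟩ := hext PE ιP πP hιPinj hπPsurj hrkP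
  obtain ⟨s, hss⟩ := section_of_retraction A ιP πP hπPsurj hrkP r hrr
  refine ⟨s ≫ ModuleCat.ofHom ((LinearMap.snd A ↥X ↥Y).comp Pm.subtype), fun x => ?_⟩
  obtain ⟨w, hw⟩ : ∃ w : ↥Pm, s x = w := ⟨s x, rfl⟩
  have hmemx := (hmem (w : ↥X × ↥Y)).mp w.2
  have hfst : ((w : ↥X × ↥Y)).1 = x := by
    have := hss x
    rw [hw] at this
    exact this
  rw [hfst] at hmemx
  show g ((Pm.subtype) (s x)).2 = f x
  rw [hw]
  exact hmemx.symm

lemma ext1_of_iso {L N M : ModuleCat.{u} A} (h : Ext1Zero A L N) (e : N ≅ M) :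
    Ext1Zero A L M := by
  intro E i p hi hp hrk
  have hehom : Function.Injective e.hom.hom := by
    intro a b hab
    have h1 : e.inv (e.hom a) = e.inv (e.hom b) := congrArg e.inv hab
    have h2 : ∀ z : N, e.inv (e.hom z) = z := fun z => LinearMap.congr_fun (congrArg ModuleCat.Hom.hom e.hom_inv_id) z
    rw [h2, h2] at h1
    exact h1
  have hesurj : Function.Surjective e.hom.hom := by
    intro m
    exact ⟨e.inv m, LinearMap.congr_fun (congrArg ModuleCat.Hom.hom e.inv_hom_id) m⟩
  obtain ⟨r, hr⟩ := h E (e.hom ≫ i) p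
    (fun a b hab => hehom (hi hab)) hp (by
      rw [← hrk]
      apply le_antisymm
      · rintro _ ⟨z, rfl⟩
        exact ⟨e.hom z, rfl⟩
      · rintro _ ⟨m, rfl⟩
        obtain ⟨z, rfl⟩ := hesurj m
        exact ⟨z, rfl⟩)
  refine ⟨r ≫ e.hom, ?_⟩
  have h1 : e.hom ≫ i ≫ r = 𝟙 N := by rw [← Category.assoc]; exact hr
  have h2 : i ≫ r = e.inv := by
    rw [← Category.id_comp (i ≫ r), ← e.inv_hom_id, Category.assoc, h1, Category.comp_id]
  rw [← Category.assoc, h2, e.inv_hom_id]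


-- appended part (test with defs from real file later)
lemma cyclesIsoKer (T : ChainComplex (ModuleCat.{u} A) ℤ) (k : ℤ) :
    Nonempty (T.cycles k ≅ ModuleCat.of A ↥(LinearMap.ker (T.d k (k - 1)).hom)) := by
  have hn : (ComplexShape.down ℤ).next k = k - 1 := by simp
  have hker : LinearMap.ker (T.dFrom k).hom = LinearMap.ker (T.d k (k - 1)).hom := by
    rw [← hn]
  exact ⟨(ShortComplex.moduleCatCyclesIso (T.sc k)) ≪≫
    (LinearEquiv.ofEq _ _ hker).toModuleIso⟩

lemma complex_exact (T : ChainComplex (ModuleCat.{u} A) ℤ) (hac : ∀ n : ℤ, T.ExactAt n)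
    (k : ℤ) : LinearMap.range (T.d (k + 1) k).hom = LinearMap.ker (T.d k (k - 1)).hom := by
  have h := (HomologicalComplex.exactAt_iff' T (k + 1) k (k - 1) (by simp) (by simp)).mp (hac k)
  exact (ShortComplex.moduleCat_exact_iff_range_eq_ker _).mp h


lemma key (U V : Set (ModuleCat.{u} A)) (hpair : IsCotorsionPair A U V)
    (hwrp : WeaklyRightPeriodic A V)
    (T : ChainComplex (ModuleCat.{u} A) ℤ) (hinjT : ∀ n, Injective (T.X n))
    (hac : Acyclic A T) :
    ∀ (n : ℕ) (L : ModuleCat.{u} A), ResLE A U n L → ∀ k : ℤ,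
      Ext1Zero A L (ModuleCat.of A ↥(LinearMap.ker (T.d k (k - 1)).hom)) := by
  have hU_ext : ∀ L' ∈ U, ∀ k : ℤ,
      Ext1Zero A L' (ModuleCat.of A ↥(LinearMap.ker (T.d k (k - 1)).hom)) := by
    intro L' hL' k
    have h1 : ∀ N ∈ V, Ext1Zero A L' N := by
      rw [hpair.1] at hL'
      exact hL'
    exact ext1_of_iso A (h1 _ (hwrp T hinjT hac k)) (cyclesIsoKer A T k).some
  intro n
  induction n with
  | zero => intro L hL k; exact hU_ext L hL k
  | succ n IH =>
    intro L hL k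
    rcases hL with hL | ⟨K, U₀, j, q, hU₀, hjinj, hqsurj, hjq, hK⟩
    · exact IH L hL k
    intro E i p hi hp hip
    obtain ⟨σ, hσ⟩ := lift_of_ext1 A p i hp hi hip (hU_ext U₀ hU₀ k) q
    obtain ⟨φ, hφ⟩ := lift_range A i hi (j ≫ σ) (by
      intro x
      rw [hip]
      show p (σ (j x)) = 0
      rw [hσ (j x)]
      have hjk : j x ∈ LinearMap.ker q.hom := by
        rw [← hjq]; exact LinearMap.mem_range_self j.hom x
      exact hjk)
    have hK1 := IH K hK (k + 1)
    rw [show (k : ℤ) + 1 - 1 = k from by ring] at hK1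
    have hdmem : ∀ x : ↥(T.X (k + 1)), T.d (k + 1) k x ∈ LinearMap.ker (T.d k (k - 1)).hom := by
      intro x
      rw [← complex_exact A T hac k]
      exact LinearMap.mem_range_self _ x
    let Zmod : ModuleCat.{u} A := ModuleCat.of A ↥(LinearMap.ker (T.d k (k - 1)).hom)
    let dh : T.X (k + 1) ⟶ Zmod := ModuleCat.ofHom <|
      LinearMap.codRestrict (LinearMap.ker (T.d k (k - 1)).hom) (T.d (k + 1) k).hom hdmem
    have hdhsurj : Function.Surjective dh := by
      rintro ⟨z, hz⟩
      rw [← complex_exact A T hac k] at hz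
      obtain ⟨x, hx⟩ := hz
      exact ⟨x, Subtype.ext hx⟩
    let ι' : ModuleCat.of A ↥(LinearMap.ker (T.d (k + 1) k).hom) ⟶ T.X (k + 1) :=
      ModuleCat.ofHom (LinearMap.ker (T.d (k + 1) k).hom).subtype
    have hι'inj : Function.Injective ι' := Subtype.coe_injective
    have hι'rk : LinearMap.range ι'.hom = LinearMap.ker dh.hom := by
      rw [ModuleCat.hom_ofHom, ModuleCat.hom_ofHom, Submodule.range_subtype, LinearMap.ker_codRestrict]
    obtain ⟨φt, hφt⟩ := lift_of_ext1 A dh ι' hdhsurj hι'inj hι'rk hK1 φ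
    have hmono : Mono j := (ModuleCat.mono_iff_injective j).mpr hjinj
    have hInj : Injective (T.X (k + 1)) := hinjT (k + 1)
    let g : U₀ ⟶ T.X (k + 1) := Injective.factorThru φt j
    have hg : ∀ x : ↥K, g (j x) = φt x := fun x =>
      LinearMap.congr_fun (congrArg ModuleCat.Hom.hom (Injective.comp_factorThru φt j)) x
    let ψ : U₀ ⟶ Zmod := g ≫ dh
    let σ' : U₀ ⟶ E := σ - (ψ ≫ i)
    have hσ'j : ∀ x : ↥K, σ' (j x) = 0 := by
      intro x
      show σ (j x) - i (dh (g (j x))) = 0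
      rw [hg x, hφt x, hφ x]
      exact sub_self _
    have hσ'ker : ∀ u : ↥U₀, q u = 0 → σ' u = 0 := by
      intro u hu
      have hur : u ∈ LinearMap.range j.hom := by rw [hjq]; exact hu
      obtain ⟨x, rfl⟩ := hur
      exact hσ'j x
    obtain ⟨t, ht⟩ := factor_through_surj A q σ' hqsurj hσ'ker
    have hts : ∀ l : ↥L, p (t l) = l := by
      intro l
      obtain ⟨u, rfl⟩ := hqsurj l
      have h1 : t (q u) = σ' u := LinearMap.congr_fun (congrArg ModuleCat.Hom.hom ht) u
      rw [h1]
      show p (σ u - i (ψ u)) = q u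
      rw [map_sub, hσ u]
      have hpi : p (i (ψ u)) = 0 := by
        have hm : i (ψ u) ∈ LinearMap.ker p.hom := by
          rw [← hip]; exact LinearMap.mem_range_self i.hom (ψ u)
        exact hm
      rw [hpi, sub_zero]
    exact retraction_of_section A i p hi hip t hts

/-- Gorenstein injective modules are right orthogonal to modules of finite
`U`-projective dimension when `(U,V)` is weakly right periodic. -/
theorem stmt_2 (A : Type u) [Ring A] (U V : Set (ModuleCat.{u} A))
    (hpair : IsCotorsionPair A U V) (hhered : IsHereditaryPair A U V)
    (hgen : GeneratedBySet A V) (hwrp : WeaklyRightPeriodic A V)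
    (n : ℕ) (M L : ModuleCat.{u} A)
    (hM : GorensteinInjective A M) (hL : ResLE A U n L) :
    Ext1Zero A L M := by
  obtain ⟨T, hinjT, hacT, -, m, ⟨eM⟩⟩ := hM
  have hkey := key A U V hpair hwrp T hinjT hacT n L hL m
  exact ext1_of_iso A hkey ((cyclesIsoKer A T m).some.symm ≪≫ eM.symm)

end OSG
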